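/- Let H be a Hopf algebra, A an algebra, φ : H ⊗ A → A and ω : H ⊗ H → A, with ψ(h ⊗ a) = Σ φ(h₍₁₎ ⊗ a) ⊗ h₍₂₎ and σ(h ⊗ g) = Σ ω(h₍₁₎ ⊗ g₍₁₎) ⊗ h₍₂₎g₍₂₎. Then the partial twisted condition Σ φ(h₍₁₎ ⊗ φ(g₍₁₎ ⊗ a)) ω(h₍₂₎ ⊗ g₍₂₎) = Σ ω(h₍₁₎ ⊗ g₍₁₎) φ(h₍₂₎g₍₂₎ ⊗ a) holds for all h, g ∈ H, a ∈ A if and only if the twisted condition (μ_A ⊗ H) ∘ (A ⊗ ψ) ∘ (σ ⊗ A) = (μ_A ⊗ H) ∘ (A ⊗ σ) ∘ (ψ ⊗ H) ∘ (H ⊗ ψ) holds. -/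

import Mathlib

open TensorProduct

variable {R A V H : Type*} [CommRing R] [Ring A] [Algebra R A]
  [AddCommGroup V] [Module R V] [Ring H] [HopfAlgebra R H]

/-- (μ_A ⊗ V) ∘ (A ⊗ ψ) ∘ (ψ ⊗ A) : (V ⊗ A) ⊗ A → A ⊗ V -/
noncomputable def psiMulLHS (ψ : V ⊗[R] A →ₗ[R] A ⊗[R] V) :
    (V ⊗[R] A) ⊗[R] A →ₗ[R] A ⊗[R] V :=
  TensorProduct.map (LinearMap.mul' R A) LinearMap.id
    ∘ₗ (TensorProduct.assoc R A A V).symm.toLinearMap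
    ∘ₗ LinearMap.lTensor A ψ
    ∘ₗ (TensorProduct.assoc R A V A).toLinearMap
    ∘ₗ LinearMap.rTensor A ψ

/-- ψ ∘ (V ⊗ μ_A) : (V ⊗ A) ⊗ A → A ⊗ V -/
noncomputable def psiMulRHS (ψ : V ⊗[R] A →ₗ[R] A ⊗[R] V) :
    (V ⊗[R] A) ⊗[R] A →ₗ[R] A ⊗[R] V :=
  ψ ∘ₗ LinearMap.lTensor V (LinearMap.mul' R A)
    ∘ₗ (TensorProduct.assoc R V A A).toLinearMap

/-- ∇ = (μ_A ⊗ V) ∘ (A ⊗ ψ) ∘ (A ⊗ V ⊗ η_A) : A ⊗ V → A ⊗ V -/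
noncomputable def nabla (ψ : V ⊗[R] A →ₗ[R] A ⊗[R] V) :
    A ⊗[R] V →ₗ[R] A ⊗[R] V :=
  TensorProduct.map (LinearMap.mul' R A) LinearMap.id
    ∘ₗ (TensorProduct.assoc R A A V).symm.toLinearMap
    ∘ₗ LinearMap.lTensor A ψ
    ∘ₗ LinearMap.lTensor A ((TensorProduct.mk R V A).flip 1)

/-- ψ(h ⊗ a) = Σ φ(h₍₁₎ ⊗ a) ⊗ h₍₂₎. -/
noncomputable def psiOf (φ : H ⊗[R] A →ₗ[R] A) : H ⊗[R] A →ₗ[R] A ⊗[R] H :=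
  LinearMap.rTensor H φ
    ∘ₗ (TensorProduct.assoc R H A H).symm.toLinearMap
    ∘ₗ LinearMap.lTensor H (TensorProduct.comm R H A).toLinearMap
    ∘ₗ (TensorProduct.assoc R H H A).toLinearMap
    ∘ₗ LinearMap.rTensor A (Coalgebra.comul : H →ₗ[R] H ⊗[R] H)

/-- σ(h ⊗ g) = Σ ω(h₍₁₎ ⊗ g₍₁₎) ⊗ h₍₂₎g₍₂₎. -/
noncomputable def sigmaOf (ω : H ⊗[R] H →ₗ[R] A) : H ⊗[R] H →ₗ[R] A ⊗[R] H :=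
  TensorProduct.map ω (LinearMap.mul' R H)
    ∘ₗ (TensorProduct.tensorTensorTensorComm R H H H H).toLinearMap
    ∘ₗ TensorProduct.map (Coalgebra.comul : H →ₗ[R] H ⊗[R] H)
        (Coalgebra.comul : H →ₗ[R] H ⊗[R] H)

/-- Condition (ii) of a twisted partial action:
φ(h ⊗ ab) = Σ φ(h₍₁₎ ⊗ a) φ(h₍₂₎ ⊗ b), as maps H ⊗ (A ⊗ A) → A. -/
def IsPartiallyMultiplicative (φ : H ⊗[R] A →ₗ[R] A) : Prop :=
  φ ∘ₗ LinearMap.lTensor H (LinearMap.mul' R A) =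
    LinearMap.mul' R A ∘ₗ TensorProduct.map φ φ
      ∘ₗ (TensorProduct.tensorTensorTensorComm R H H A A).toLinearMap
      ∘ₗ LinearMap.rTensor (A ⊗[R] A) (Coalgebra.comul : H →ₗ[R] H ⊗[R] H)

/-- Twisted condition LHS: (μ_A ⊗ V) ∘ (A ⊗ ψ) ∘ (σ ⊗ A) : (V ⊗ V) ⊗ A → A ⊗ V. -/
noncomputable def twistedLHS (ψ : V ⊗[R] A →ₗ[R] A ⊗[R] V)
    (σ : V ⊗[R] V →ₗ[R] A ⊗[R] V) : (V ⊗[R] V) ⊗[R] A →ₗ[R] A ⊗[R] V :=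
  TensorProduct.map (LinearMap.mul' R A) LinearMap.id
    ∘ₗ (TensorProduct.assoc R A A V).symm.toLinearMap
    ∘ₗ LinearMap.lTensor A ψ
    ∘ₗ (TensorProduct.assoc R A V A).toLinearMap
    ∘ₗ LinearMap.rTensor A σ

/-- Twisted condition RHS: (μ_A ⊗ V) ∘ (A ⊗ σ) ∘ (ψ ⊗ V) ∘ (V ⊗ ψ) : V ⊗ (V ⊗ A) → A ⊗ V. -/
noncomputable def twistedRHS (ψ : V ⊗[R] A →ₗ[R] A ⊗[R] V)
    (σ : V ⊗[R] V →ₗ[R] A ⊗[R] V) : V ⊗[R] (V ⊗[R] A) →ₗ[R] A ⊗[R] V :=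
  TensorProduct.map (LinearMap.mul' R A) LinearMap.id
    ∘ₗ (TensorProduct.assoc R A A V).symm.toLinearMap
    ∘ₗ LinearMap.lTensor A σ
    ∘ₗ (TensorProduct.assoc R A V V).toLinearMap
    ∘ₗ LinearMap.rTensor V ψ
    ∘ₗ (TensorProduct.assoc R V A V).symm.toLinearMap
    ∘ₗ LinearMap.lTensor V ψ

/-- Cocycle condition LHS: (μ_A ⊗ V) ∘ (A ⊗ σ) ∘ (σ ⊗ V) : (V ⊗ V) ⊗ V → A ⊗ V. -/
noncomputable def cocycleLHS (σ : V ⊗[R] V →ₗ[R] A ⊗[R] V) :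
    (V ⊗[R] V) ⊗[R] V →ₗ[R] A ⊗[R] V :=
  TensorProduct.map (LinearMap.mul' R A) LinearMap.id
    ∘ₗ (TensorProduct.assoc R A A V).symm.toLinearMap
    ∘ₗ LinearMap.lTensor A σ
    ∘ₗ (TensorProduct.assoc R A V V).toLinearMap
    ∘ₗ LinearMap.rTensor V σ

/-- Cocycle condition RHS: (μ_A ⊗ V) ∘ (A ⊗ σ) ∘ (ψ ⊗ V) ∘ (V ⊗ σ) : V ⊗ (V ⊗ V) → A ⊗ V. -/
noncomputable def cocycleRHS (ψ : V ⊗[R] A →ₗ[R] A ⊗[R] V)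
    (σ : V ⊗[R] V →ₗ[R] A ⊗[R] V) : V ⊗[R] (V ⊗[R] V) →ₗ[R] A ⊗[R] V :=
  TensorProduct.map (LinearMap.mul' R A) LinearMap.id
    ∘ₗ (TensorProduct.assoc R A A V).symm.toLinearMap
    ∘ₗ LinearMap.lTensor A σ
    ∘ₗ (TensorProduct.assoc R A V V).toLinearMap
    ∘ₗ LinearMap.rTensor V ψ
    ∘ₗ (TensorProduct.assoc R V A V).symm.toLinearMap
    ∘ₗ LinearMap.lTensor V σ

/-- Auxiliary map V ⊗ (A ⊗ V) → A ⊗ V used in the weak crossed product. -/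
noncomputable def wcpAux (ψ : V ⊗[R] A →ₗ[R] A ⊗[R] V)
    (σ : V ⊗[R] V →ₗ[R] A ⊗[R] V) : V ⊗[R] (A ⊗[R] V) →ₗ[R] A ⊗[R] V :=
  TensorProduct.map (LinearMap.mul' R A) LinearMap.id
    ∘ₗ (TensorProduct.assoc R A A V).symm.toLinearMap
    ∘ₗ LinearMap.lTensor A σ
    ∘ₗ (TensorProduct.assoc R A V V).toLinearMap
    ∘ₗ LinearMap.rTensor V ψ
    ∘ₗ (TensorProduct.assoc R V A V).symm.toLinearMap

/-- The weak crossed product multiplication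
μ_{A⊗V} = (μ_A ⊗ V) ∘ (μ_A ⊗ σ) ∘ (A ⊗ ψ ⊗ V) on A ⊗ V. -/
noncomputable def wcpMul (ψ : V ⊗[R] A →ₗ[R] A ⊗[R] V)
    (σ : V ⊗[R] V →ₗ[R] A ⊗[R] V) :
    (A ⊗[R] V) ⊗[R] (A ⊗[R] V) →ₗ[R] A ⊗[R] V :=
  TensorProduct.map (LinearMap.mul' R A) LinearMap.id
    ∘ₗ (TensorProduct.assoc R A A V).symm.toLinearMap
    ∘ₗ LinearMap.lTensor A (wcpAux ψ σ)
    ∘ₗ (TensorProduct.assoc R A V (A ⊗[R] V)).toLinearMap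

/-- Partial twisted condition LHS: μ_A ∘ (A ⊗ ω) ∘ (ψ ⊗ H) ∘ (H ⊗ ψ),
i.e. (h ⊗ g ⊗ a) ↦ Σ φ(h₍₁₎ ⊗ φ(g₍₁₎ ⊗ a)) ω(h₍₂₎ ⊗ g₍₂₎). -/
noncomputable def partialTwistedLHS (φ : H ⊗[R] A →ₗ[R] A)
    (ω : H ⊗[R] H →ₗ[R] A) : H ⊗[R] (H ⊗[R] A) →ₗ[R] A :=
  LinearMap.mul' R A
    ∘ₗ LinearMap.lTensor A ω
    ∘ₗ (TensorProduct.assoc R A H H).toLinearMap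
    ∘ₗ LinearMap.rTensor H (psiOf φ)
    ∘ₗ (TensorProduct.assoc R H A H).symm.toLinearMap
    ∘ₗ LinearMap.lTensor H (psiOf φ)

/-- Partial twisted condition RHS: μ_A ∘ (A ⊗ φ) ∘ (σ ⊗ A),
i.e. (h ⊗ g ⊗ a) ↦ Σ ω(h₍₁₎ ⊗ g₍₁₎) φ(h₍₂₎g₍₂₎ ⊗ a). -/
noncomputable def partialTwistedRHS (φ : H ⊗[R] A →ₗ[R] A)
    (ω : H ⊗[R] H →ₗ[R] A) : (H ⊗[R] H) ⊗[R] A →ₗ[R] A :=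
  LinearMap.mul' R A
    ∘ₗ LinearMap.lTensor A φ
    ∘ₗ (TensorProduct.assoc R A H A).toLinearMap
    ∘ₗ LinearMap.rTensor A (sigmaOf ω)

/-- Partial cocycle condition LHS:
(h ⊗ g ⊗ l) ↦ Σ φ(h₍₁₎ ⊗ ω(g₍₁₎ ⊗ l₍₁₎)) ω(h₍₂₎ ⊗ g₍₂₎l₍₂₎),
i.e. μ_A ∘ (A ⊗ ω) ∘ (ψ ⊗ H) ∘ (H ⊗ σ). -/
noncomputable def partialCocycleLHS (φ : H ⊗[R] A →ₗ[R] A)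
    (ω : H ⊗[R] H →ₗ[R] A) : H ⊗[R] (H ⊗[R] H) →ₗ[R] A :=
  LinearMap.mul' R A
    ∘ₗ LinearMap.lTensor A ω
    ∘ₗ (TensorProduct.assoc R A H H).toLinearMap
    ∘ₗ LinearMap.rTensor H (psiOf φ)
    ∘ₗ (TensorProduct.assoc R H A H).symm.toLinearMap
    ∘ₗ LinearMap.lTensor H (sigmaOf ω)

/-- Partial cocycle condition RHS:
(h ⊗ g ⊗ l) ↦ Σ ω(h₍₁₎ ⊗ g₍₁₎) ω(h₍₂₎g₍₂₎ ⊗ l), i.e. μ_A ∘ (A ⊗ ω) ∘ (σ ⊗ H). -/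
noncomputable def partialCocycleRHS (ω : H ⊗[R] H →ₗ[R] A) :
    (H ⊗[R] H) ⊗[R] H →ₗ[R] A :=
  LinearMap.mul' R A
    ∘ₗ LinearMap.lTensor A ω
    ∘ₗ (TensorProduct.assoc R A H H).toLinearMap
    ∘ₗ LinearMap.rTensor H (sigmaOf ω)

set_option synthInstance.maxHeartbeats 400000
set_option maxHeartbeats 1000000

open Coalgebra

lemma psiOf_apply {ι : Type*} (φ : H ⊗[R] A →ₗ[R] A) (h : H) (a : A) (r : Coalgebra.Repr R h ι) :
    psiOf φ (h ⊗ₜ[R] a) = ∑ i ∈ r.index, φ (r.left i ⊗ₜ[R] a) ⊗ₜ[R] r.right i := by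
  simp only [psiOf, LinearMap.coe_comp, Function.comp_apply, LinearEquiv.coe_coe,
    LinearMap.rTensor_tmul, ← r.eq]
  rw [sum_tmul]
  simp [map_sum]

lemma sigmaOf_apply (ω : H ⊗[R] H →ₗ[R] A) (h g : H)
    (rh : Coalgebra.Repr R h (H × H)) (rg : Coalgebra.Repr R g (H × H)) :
    sigmaOf ω (h ⊗ₜ[R] g) = ∑ i ∈ rh.index, ∑ j ∈ rg.index,
      ω (rh.left i ⊗ₜ[R] rg.left j) ⊗ₜ[R] (rh.right i * rg.right j) := by
  simp only [sigmaOf, LinearMap.coe_comp, Function.comp_apply, LinearEquiv.coe_coe,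
    TensorProduct.map_tmul, ← rh.eq, ← rg.eq]
  rw [sum_tmul]
  simp [map_sum, tmul_sum, LinearMap.mul'_apply]

lemma pLHS_apply (φ : H ⊗[R] A →ₗ[R] A) (ω : H ⊗[R] H →ₗ[R] A) (h g : H) (a : A)
    (rh : Coalgebra.Repr R h (H × H)) (rg : Coalgebra.Repr R g (H × H)) :
    partialTwistedLHS φ ω (h ⊗ₜ[R] (g ⊗ₜ[R] a)) = ∑ i ∈ rh.index, ∑ j ∈ rg.index,
      φ (rh.left i ⊗ₜ[R] φ (rg.left j ⊗ₜ[R] a)) * ω (rh.right i ⊗ₜ[R] rg.right j) := by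
  simp only [partialTwistedLHS, LinearMap.coe_comp, Function.comp_apply,
    LinearMap.lTensor_tmul, psiOf_apply φ g a rg]
  rw [tmul_sum]
  simp only [map_sum, LinearEquiv.coe_coe, TensorProduct.assoc_symm_tmul,
    LinearMap.rTensor_tmul, psiOf_apply φ h _ rh]
  rw [Finset.sum_comm]
  simp [sum_tmul, map_sum, LinearMap.mul'_apply]

lemma pRHS_apply (φ : H ⊗[R] A →ₗ[R] A) (ω : H ⊗[R] H →ₗ[R] A) (h g : H) (a : A)
    (rh : Coalgebra.Repr R h (H × H)) (rg : Coalgebra.Repr R g (H × H)) :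
    partialTwistedRHS φ ω ((h ⊗ₜ[R] g) ⊗ₜ[R] a) = ∑ i ∈ rh.index, ∑ j ∈ rg.index,
      ω (rh.left i ⊗ₜ[R] rg.left j) * φ ((rh.right i * rg.right j) ⊗ₜ[R] a) := by
  simp only [partialTwistedRHS, LinearMap.coe_comp, Function.comp_apply,
    LinearMap.rTensor_tmul, sigmaOf_apply ω h g rh rg]
  rw [sum_tmul]
  simp [sum_tmul, map_sum, LinearMap.mul'_apply]

/-- Product of two comultiplication representations (bialgebra). -/

noncomputable def reprMul {x y : H} (r1 : Coalgebra.Repr R x (H × H)) (r2 : Coalgebra.Repr R y (H × H)) :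
    Coalgebra.Repr R (x * y) ((H × H) × (H × H)) where
  index := r1.index ×ˢ r2.index
  left p := r1.left p.1 * r2.left p.2
  right p := r1.right p.1 * r2.right p.2
  eq := by
    rw [Bialgebra.comul_mul, ← r1.eq, ← r2.eq, Finset.sum_mul_sum]
    simp [Finset.sum_product, Algebra.TensorProduct.tmul_mul_tmul]

/-- The generic quadruple map: (x ⊗ (y ⊗ z)) ⊗ (u ⊗ (v ⊗ w)) ↦ F(x⊗u) * G(y⊗v) ⊗ₜ (z*w). -/

noncomputable def Mgen (F G : H ⊗[R] H →ₗ[R] A) :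
    (H ⊗[R] (H ⊗[R] H)) ⊗[R] (H ⊗[R] (H ⊗[R] H)) →ₗ[R] A ⊗[R] H :=
  TensorProduct.map (LinearMap.mul' R A) LinearMap.id
    ∘ₗ (TensorProduct.assoc R A A H).symm.toLinearMap
    ∘ₗ TensorProduct.map F (TensorProduct.map G (LinearMap.mul' R H))
    ∘ₗ LinearMap.lTensor (H ⊗[R] H) (TensorProduct.tensorTensorTensorComm R H H H H).toLinearMap
    ∘ₗ (TensorProduct.tensorTensorTensorComm R H (H ⊗[R] H) H (H ⊗[R] H)).toLinearMap

@[simp] lemma Mgen_tmul (F G : H ⊗[R] H →ₗ[R] A) (x y z u v w : H) :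
    Mgen F G ((x ⊗ₜ[R] (y ⊗ₜ[R] z)) ⊗ₜ[R] (u ⊗ₜ[R] (v ⊗ₜ[R] w))) =
      (F (x ⊗ₜ[R] u) * G (y ⊗ₜ[R] v)) ⊗ₜ[R] (z * w) := by
  simp [Mgen, LinearMap.mul'_apply]

lemma twistedLHS_apply (φ : H ⊗[R] A →ₗ[R] A) (ω : H ⊗[R] H →ₗ[R] A) (h g : H) (a : A)
    (rh : Coalgebra.Repr R h (H × H)) (rg : Coalgebra.Repr R g (H × H))
    (r2 : ∀ i j, Coalgebra.Repr R (rh.right i * rg.right j) ((H × H) × (H × H))) :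
    twistedLHS (psiOf φ) (sigmaOf ω) ((h ⊗ₜ[R] g) ⊗ₜ[R] a) =
      ∑ i ∈ rh.index, ∑ j ∈ rg.index, ∑ k ∈ (r2 i j).index,
        (ω (rh.left i ⊗ₜ[R] rg.left j) * φ ((r2 i j).left k ⊗ₜ[R] a))
          ⊗ₜ[R] (r2 i j).right k := by
  simp only [twistedLHS, LinearMap.coe_comp, Function.comp_apply, LinearMap.rTensor_tmul,
    sigmaOf_apply ω h g rh rg]
  rw [sum_tmul]
  simp only [Finset.sum_apply, map_sum, LinearEquiv.coe_coe, TensorProduct.assoc_tmul,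
    LinearMap.lTensor_tmul]
  refine Finset.sum_congr rfl fun i _ => ?_
  rw [sum_tmul]
  simp only [map_sum, LinearEquiv.coe_coe, TensorProduct.assoc_tmul, LinearMap.lTensor_tmul]
  refine Finset.sum_congr rfl fun j _ => ?_
  rw [psiOf_apply φ _ a (r2 i j)]
  simp [tmul_sum, map_sum, LinearMap.mul'_apply]

lemma twistedRHS_apply (φ : H ⊗[R] A →ₗ[R] A) (ω : H ⊗[R] H →ₗ[R] A) (h g : H) (a : A)
    (rh : Coalgebra.Repr R h (H × H)) (rg : Coalgebra.Repr R g (H × H))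
    (r2h : ∀ i, Coalgebra.Repr R (rh.right i) (H × H))
    (r2g : ∀ j, Coalgebra.Repr R (rg.right j) (H × H)) :
    twistedRHS (psiOf φ) (sigmaOf ω) (h ⊗ₜ[R] (g ⊗ₜ[R] a)) =
      ∑ i ∈ rh.index, ∑ j ∈ rg.index, ∑ k ∈ (r2h i).index, ∑ l ∈ (r2g j).index,
        (φ (rh.left i ⊗ₜ[R] φ (rg.left j ⊗ₜ[R] a)) *
            ω ((r2h i).left k ⊗ₜ[R] (r2g j).left l))
          ⊗ₜ[R] ((r2h i).right k * (r2g j).right l) := by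
  simp only [twistedRHS, LinearMap.coe_comp, Function.comp_apply, LinearMap.lTensor_tmul,
    psiOf_apply φ g a rg]
  rw [tmul_sum]
  simp only [map_sum, LinearEquiv.coe_coe, TensorProduct.assoc_symm_tmul,
    LinearMap.rTensor_tmul]
  refine Eq.trans (Finset.sum_congr rfl fun j _ => ?_) Finset.sum_comm
  rw [psiOf_apply φ h _ rh, sum_tmul]
  simp only [map_sum, LinearEquiv.coe_coe, TensorProduct.assoc_tmul, LinearMap.lTensor_tmul]
  refine Finset.sum_congr rfl fun i _ => ?_
  rw [sigmaOf_apply ω _ _ (r2h i) (r2g j)]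
  simp [tmul_sum, map_sum, LinearMap.mul'_apply]

lemma sum4_comm {M ι1 ι2 ι3 ι4 : Type*} [AddCommMonoid M] {s1 : Finset ι1} {s2 : Finset ι2}
    {t1 : ι1 → Finset ι3} {t2 : ι2 → Finset ι4} {f : ι1 → ι3 → ι2 → ι4 → M} :
    ∑ i ∈ s1, ∑ j ∈ s2, ∑ k ∈ t1 i, ∑ l ∈ t2 j, f i k j l
      = ∑ j ∈ s2, ∑ l ∈ t2 j, ∑ i ∈ s1, ∑ k ∈ t1 i, f i k j l := by
  refine Eq.trans Finset.sum_comm (Finset.sum_congr rfl fun j _ => ?_)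
  refine Eq.trans (Finset.sum_congr rfl fun i _ => Finset.sum_comm) ?_
  exact Finset.sum_comm

lemma key1 (φ : H ⊗[R] A →ₗ[R] A) (ω : H ⊗[R] H →ₗ[R] A) (h g : H) (a : A) :
    twistedLHS (psiOf φ) (sigmaOf ω) ((h ⊗ₜ[R] g) ⊗ₜ[R] a) =
      ∑ i ∈ (ℛ R h).index, ∑ j ∈ (ℛ R g).index,
        partialTwistedRHS φ ω
            (((ℛ R h).left i ⊗ₜ[R] (ℛ R g).left j) ⊗ₜ[R] a)
          ⊗ₜ[R] ((ℛ R h).right i * (ℛ R g).right j) := by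
  have coh := Coalgebra.sum_tmul_tmul_eq (R := R) (ℛ R h)
    (fun i => ℛ R ((ℛ R h).left i)) (fun i => ℛ R ((ℛ R h).right i))
  have cog := Coalgebra.sum_tmul_tmul_eq (R := R) (ℛ R g)
    (fun j => ℛ R ((ℛ R g).left j)) (fun j => ℛ R ((ℛ R g).right j))
  set G : H ⊗[R] H →ₗ[R] A :=
    φ ∘ₗ ((TensorProduct.mk R H A).flip a) ∘ₗ LinearMap.mul' R H with hGdef
  calc twistedLHS (psiOf φ) (sigmaOf ω) ((h ⊗ₜ[R] g) ⊗ₜ[R] a)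
      = Mgen ω G
          ((∑ i ∈ (ℛ R h).index, ∑ k ∈ (ℛ R ((ℛ R h).right i)).index,
              (ℛ R h).left i ⊗ₜ[R] ((ℛ R ((ℛ R h).right i)).left k
                ⊗ₜ[R] (ℛ R ((ℛ R h).right i)).right k)) ⊗ₜ[R]
           (∑ j ∈ (ℛ R g).index, ∑ l ∈ (ℛ R ((ℛ R g).right j)).index,
              (ℛ R g).left j ⊗ₜ[R] ((ℛ R ((ℛ R g).right j)).left l
                ⊗ₜ[R] (ℛ R ((ℛ R g).right j)).right l))) := by
        rw [twistedLHS_apply φ ω h g a (ℛ R h) (ℛ R g)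
          (fun i j => reprMul (ℛ R ((ℛ R h).right i)) (ℛ R ((ℛ R g).right j)))]
        simp only [sum_tmul, tmul_sum, map_sum, Mgen_tmul, hGdef, LinearMap.coe_comp,
          Function.comp_apply, LinearMap.mul'_apply, TensorProduct.mk_apply,
          LinearMap.flip_apply, reprMul]
        simp only [Finset.sum_product]
        exact sum4_comm
    _ = Mgen ω G
          ((∑ i ∈ (ℛ R h).index, ∑ k ∈ (ℛ R ((ℛ R h).left i)).index,
              (ℛ R ((ℛ R h).left i)).left k ⊗ₜ[R] ((ℛ R ((ℛ R h).left i)).right k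
                ⊗ₜ[R] (ℛ R h).right i)) ⊗ₜ[R]
           (∑ j ∈ (ℛ R g).index, ∑ l ∈ (ℛ R ((ℛ R g).left j)).index,
              (ℛ R ((ℛ R g).left j)).left l ⊗ₜ[R] ((ℛ R ((ℛ R g).left j)).right l
                ⊗ₜ[R] (ℛ R g).right j))) := by rw [coh, cog]
    _ = _ := by
        simp only [sum_tmul, tmul_sum, map_sum, Mgen_tmul, hGdef, LinearMap.coe_comp,
          Function.comp_apply, LinearMap.mul'_apply, TensorProduct.mk_apply,
          LinearMap.flip_apply]
        symm
        refine Eq.trans (Finset.sum_congr rfl fun i _ => Finset.sum_congr rfl fun j _ => ?_)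
          sum4_comm
        rw [pRHS_apply φ ω _ _ a (ℛ R ((ℛ R h).left i)) (ℛ R ((ℛ R g).left j)), sum_tmul]
        refine Finset.sum_congr rfl fun k _ => ?_
        rw [sum_tmul]

lemma key2 (φ : H ⊗[R] A →ₗ[R] A) (ω : H ⊗[R] H →ₗ[R] A) (h g : H) (a : A) :
    twistedRHS (psiOf φ) (sigmaOf ω) (h ⊗ₜ[R] (g ⊗ₜ[R] a)) =
      ∑ i ∈ (ℛ R h).index, ∑ j ∈ (ℛ R g).index,
        partialTwistedLHS φ ω
            ((ℛ R h).left i ⊗ₜ[R] ((ℛ R g).left j ⊗ₜ[R] a))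
          ⊗ₜ[R] ((ℛ R h).right i * (ℛ R g).right j) := by
  have coh := Coalgebra.sum_tmul_tmul_eq (R := R) (ℛ R h)
    (fun i => ℛ R ((ℛ R h).left i)) (fun i => ℛ R ((ℛ R h).right i))
  have cog := Coalgebra.sum_tmul_tmul_eq (R := R) (ℛ R g)
    (fun j => ℛ R ((ℛ R g).left j)) (fun j => ℛ R ((ℛ R g).right j))
  set F : H ⊗[R] H →ₗ[R] A :=
    φ ∘ₗ LinearMap.lTensor H (φ ∘ₗ ((TensorProduct.mk R H A).flip a)) with hFdef
  calc twistedRHS (psiOf φ) (sigmaOf ω) (h ⊗ₜ[R] (g ⊗ₜ[R] a))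
      = Mgen F ω
          ((∑ i ∈ (ℛ R h).index, ∑ k ∈ (ℛ R ((ℛ R h).right i)).index,
              (ℛ R h).left i ⊗ₜ[R] ((ℛ R ((ℛ R h).right i)).left k
                ⊗ₜ[R] (ℛ R ((ℛ R h).right i)).right k)) ⊗ₜ[R]
           (∑ j ∈ (ℛ R g).index, ∑ l ∈ (ℛ R ((ℛ R g).right j)).index,
              (ℛ R g).left j ⊗ₜ[R] ((ℛ R ((ℛ R g).right j)).left l
                ⊗ₜ[R] (ℛ R ((ℛ R g).right j)).right l))) := by
        rw [twistedRHS_apply φ ω h g a (ℛ R h) (ℛ R g)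
          (fun i => ℛ R ((ℛ R h).right i)) (fun j => ℛ R ((ℛ R g).right j))]
        simp only [sum_tmul, tmul_sum, map_sum, Mgen_tmul, hFdef, LinearMap.coe_comp,
          Function.comp_apply, LinearMap.lTensor_tmul, TensorProduct.mk_apply,
          LinearMap.flip_apply]
        exact sum4_comm
    _ = Mgen F ω
          ((∑ i ∈ (ℛ R h).index, ∑ k ∈ (ℛ R ((ℛ R h).left i)).index,
              (ℛ R ((ℛ R h).left i)).left k ⊗ₜ[R] ((ℛ R ((ℛ R h).left i)).right k
                ⊗ₜ[R] (ℛ R h).right i)) ⊗ₜ[R]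
           (∑ j ∈ (ℛ R g).index, ∑ l ∈ (ℛ R ((ℛ R g).left j)).index,
              (ℛ R ((ℛ R g).left j)).left l ⊗ₜ[R] ((ℛ R ((ℛ R g).left j)).right l
                ⊗ₜ[R] (ℛ R g).right j))) := by rw [coh, cog]
    _ = _ := by
        simp only [sum_tmul, tmul_sum, map_sum, Mgen_tmul, hFdef, LinearMap.coe_comp,
          Function.comp_apply, LinearMap.lTensor_tmul, TensorProduct.mk_apply,
          LinearMap.flip_apply]
        symm
        refine Eq.trans (Finset.sum_congr rfl fun i _ => Finset.sum_congr rfl fun j _ => ?_)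
          sum4_comm
        rw [pLHS_apply φ ω _ _ a (ℛ R ((ℛ R h).left i)) (ℛ R ((ℛ R g).left j)), sum_tmul]
        refine Finset.sum_congr rfl fun k _ => ?_
        rw [sum_tmul]

lemma counit_smul_sum {h : H} (r : Coalgebra.Repr R h (H × H)) :
    ∑ i ∈ r.index, Coalgebra.counit (R := R) (r.right i) • r.left i = h := by
  have := Coalgebra.sum_tmul_counit_eq (R := R) r
  apply_fun (TensorProduct.rid R H) at this
  simp only [map_sum, TensorProduct.rid_tmul, one_smul] at this
  exact this

noncomputable def cc : A ⊗[R] H →ₗ[R] A :=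
  (TensorProduct.rid R A).toLinearMap ∘ₗ LinearMap.lTensor A (Coalgebra.counit (R := R))

@[simp] lemma cc_tmul (x : A) (y : H) :
    (cc : A ⊗[R] H →ₗ[R] A) (x ⊗ₜ[R] y) = Coalgebra.counit (R := R) y • x := by
  simp [cc]

lemma collapse {M : Type*} [AddCommGroup M] [Module R M]
    (F : (H ⊗[R] H) ⊗[R] A →ₗ[R] M) (h g : H) (a : A) :
    ∑ i ∈ (ℛ R h).index, ∑ j ∈ (ℛ R g).index,
      Coalgebra.counit (R := R) ((ℛ R h).right i * (ℛ R g).right j) •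
        F (((ℛ R h).left i ⊗ₜ[R] (ℛ R g).left j) ⊗ₜ[R] a) =
      F ((h ⊗ₜ[R] g) ⊗ₜ[R] a) := by
  conv_rhs => rw [← counit_smul_sum (ℛ R h), ← counit_smul_sum (ℛ R g)]
  simp only [sum_tmul, tmul_sum, map_sum]
  rw [Finset.sum_comm]
  refine Finset.sum_congr rfl fun j _ => Finset.sum_congr rfl fun i _ => ?_
  simp only [smul_tmul', tmul_smul, map_smul, smul_smul, Bialgebra.counit_mul]
  rw [← map_smul, smul_tmul', smul_tmul', mul_comm]

/-- The partial twisted condition holds iff the weak crossed product twisted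
condition holds for ψ and σ built from φ and ω. -/
theorem partialTwisted_iff_twisted (φ : H ⊗[R] A →ₗ[R] A)
    (ω : H ⊗[R] H →ₗ[R] A) :
    (partialTwistedLHS φ ω ∘ₗ (TensorProduct.assoc R H H A).toLinearMap =
        partialTwistedRHS φ ω) ↔
      (twistedLHS (psiOf φ) (sigmaOf ω) =
        twistedRHS (psiOf φ) (sigmaOf ω)
          ∘ₗ (TensorProduct.assoc R H H A).toLinearMap) := by
  constructor
  · intro hyp
    apply TensorProduct.ext_threefold
    intro h g a
    rw [LinearMap.comp_apply, LinearEquiv.coe_coe, TensorProduct.assoc_tmul,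
      key1, key2]
    refine Finset.sum_congr rfl fun i _ => Finset.sum_congr rfl fun j _ => ?_
    have := LinearMap.congr_fun hyp (((ℛ R h).left i ⊗ₜ[R] (ℛ R g).left j) ⊗ₜ[R] a)
    rw [LinearMap.comp_apply, LinearEquiv.coe_coe, TensorProduct.assoc_tmul] at this
    rw [this]
  · intro hyp
    apply TensorProduct.ext_threefold
    intro h g a
    rw [LinearMap.comp_apply, LinearEquiv.coe_coe, TensorProduct.assoc_tmul]
    have c1 : ∀ (F : (H ⊗[R] H) ⊗[R] A →ₗ[R] A), _ = F ((h ⊗ₜ[R] g) ⊗ₜ[R] a) :=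
      fun F => collapse F h g a
    calc partialTwistedLHS φ ω (h ⊗ₜ[R] (g ⊗ₜ[R] a))
        = (partialTwistedLHS φ ω ∘ₗ (TensorProduct.assoc R H H A).toLinearMap)
            ((h ⊗ₜ[R] g) ⊗ₜ[R] a) := by
          rw [LinearMap.comp_apply, LinearEquiv.coe_coe, TensorProduct.assoc_tmul]
      _ = ∑ i ∈ (ℛ R h).index, ∑ j ∈ (ℛ R g).index,
            Coalgebra.counit (R := R) ((ℛ R h).right i * (ℛ R g).right j) •
              (partialTwistedLHS φ ω ∘ₗ (TensorProduct.assoc R H H A).toLinearMap)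
                (((ℛ R h).left i ⊗ₜ[R] (ℛ R g).left j) ⊗ₜ[R] a) :=
          (collapse _ h g a).symm
      _ = cc (twistedRHS (psiOf φ) (sigmaOf ω) (h ⊗ₜ[R] (g ⊗ₜ[R] a))) := by
          rw [key2]
          simp only [map_sum, cc_tmul, LinearMap.comp_apply, LinearEquiv.coe_coe,
            TensorProduct.assoc_tmul]
      _ = cc (twistedLHS (psiOf φ) (sigmaOf ω) ((h ⊗ₜ[R] g) ⊗ₜ[R] a)) := by
          rw [hyp, LinearMap.comp_apply, LinearEquiv.coe_coe, TensorProduct.assoc_tmul]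
      _ = ∑ i ∈ (ℛ R h).index, ∑ j ∈ (ℛ R g).index,
            Coalgebra.counit (R := R) ((ℛ R h).right i * (ℛ R g).right j) •
              partialTwistedRHS φ ω (((ℛ R h).left i ⊗ₜ[R] (ℛ R g).left j) ⊗ₜ[R] a) := by
          rw [key1]
          simp only [map_sum, cc_tmul]
      _ = partialTwistedRHS φ ω ((h ⊗ₜ[R] g) ⊗ₜ[R] a) := collapse _ h g a
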